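/- A locally finite tree T has finitely many cone types if and only if T is isomorphic, as a rooted directed graph, to the universal covering tree of some finite connected graph. -/

import Mathlib

/-- A rooted directed multigraph. -/
structure RGraph where
  V : Type
  E : Type
  s : E → V
  t : E → V
  root : V

namespace RGraph

/-- `l` is a path: consecutive edges are composable. -/
def IsPath (A : RGraph) (l : List A.E) : Prop :=
  l.Chain' (fun e f => A.t e = A.s f)

/-- `l` is a path starting at the vertex `q`. -/
def PathFrom (A : RGraph) (q : A.V) (l : List A.E) : Prop :=
  A.IsPath l ∧ ∀ e ∈ l.head?, A.s e = q

/-- The target of the path `l` started at `q` (equal to `q` for the empty path). -/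
def pathTarget (A : RGraph) (q : A.V) (l : List A.E) : A.V :=
  l.foldl (fun _ e => A.t e) q

@[simp] lemma pathTarget_nil (A : RGraph) (q : A.V) : A.pathTarget q [] = q := rfl

@[simp] lemma pathTarget_cons (A : RGraph) (q : A.V) (a : A.E) (l : List A.E) :
    A.pathTarget q (a :: l) = A.pathTarget (A.t a) l := rfl

lemma pathTarget_append (A : RGraph) (q : A.V) (l l' : List A.E) :
    A.pathTarget q (l ++ l') = A.pathTarget (A.pathTarget q l) l' := by
  simp [pathTarget]

@[simp] lemma pathTarget_append_single (A : RGraph) (q : A.V) (l : List A.E) (e : A.E) :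
    A.pathTarget q (l ++ [e]) = A.t e := by
  rw [pathTarget_append]; rfl

lemma pathFrom_nil (A : RGraph) (q : A.V) : A.PathFrom q [] :=
  ⟨List.isChain_nil, by simp⟩

lemma pathTarget_getLast {A : RGraph} {q : A.V} {l : List A.E} {x : A.E}
    (hx : x ∈ l.getLast?) : A.pathTarget q l = A.t x := by
  induction l generalizing q with
  | nil => simp at hx
  | cons a l ih =>
    cases l with
    | nil => simp at hx; subst hx; rfl
    | cons b l =>
      rw [List.getLast?_cons_cons] at hx
      simpa using ih (q := A.t a) hx

lemma pathFrom_append_single {A : RGraph} {q : A.V} {l : List A.E} {e : A.E}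
    (h : A.PathFrom q l) (he : A.s e = A.pathTarget q l) :
    A.PathFrom q (l ++ [e]) := by
  constructor
  · apply List.isChain_append.mpr
    refine ⟨h.1, List.isChain_singleton _, ?_⟩
    intro x hx y hy
    simp at hy
    subst hy
    rw [he]
    exact (pathTarget_getLast hx).symm
  · intro f hf
    cases l with
    | nil =>
      simp at hf
      subst hf
      simpa using he
    | cons a l =>
      simp at hf
      subst hf
      exact h.2 a (by simp)

/-- `w` is reachable from `q` by an oriented path. -/
def Reach (A : RGraph) (q w : A.V) : Prop :=
  ∃ l, A.PathFrom q l ∧ A.pathTarget q l = w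

lemma reach_self (A : RGraph) (q : A.V) : A.Reach q q :=
  ⟨[], A.pathFrom_nil q, rfl⟩

lemma reach_target {A : RGraph} {q : A.V} {e : A.E} (h : A.Reach q (A.s e)) :
    A.Reach q (A.t e) := by
  obtain ⟨l, hl, ht⟩ := h
  exact ⟨l ++ [e], pathFrom_append_single hl ht.symm, by simp⟩

/-- A graph is connected (as a rooted directed graph) if every vertex is reachable
from the root. -/
def Connected (A : RGraph) : Prop := ∀ w : A.V, A.Reach A.root w

/-- A graph is a tree if the target map from paths emanating from the root to
vertices is a bijection. -/
def IsTree (A : RGraph) : Prop :=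
  Function.Bijective
    (fun l : {l : List A.E // A.PathFrom A.root l} => A.pathTarget A.root l.1)

/-- A graph is locally finite if every vertex has finitely many outgoing edges. -/
def LocallyFinite (A : RGraph) : Prop := ∀ q : A.V, Finite {e : A.E // A.s e = q}

/-- Adjacency: there is an edge from `v` to `w`. -/
def Adj (A : RGraph) (v w : A.V) : Prop := ∃ e, A.s e = v ∧ A.t e = w

/-- The induced rooted subgraph on all vertices reachable from `q` (the "cone" at `q`). -/
def subgraph (A : RGraph) (q : A.V) : RGraph where
  V := {w // A.Reach q w}
  E := {e // A.Reach q (A.s e)}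
  s := fun e => ⟨A.s e.1, e.2⟩
  t := fun e => ⟨A.t e.1, reach_target e.2⟩
  root := ⟨q, A.reach_self q⟩

/-- The truncation of the cone at `v` to vertices at distance at most `d` from `v`. -/
def trunc (A : RGraph) (v : A.V) (d : ℕ) : RGraph where
  V := {w // ∃ l, A.PathFrom v l ∧ A.pathTarget v l = w ∧ l.length ≤ d}
  E := {e // ∃ l, A.PathFrom v l ∧ A.pathTarget v l = A.s e ∧ l.length < d}
  s := fun e => ⟨A.s e.1, e.2.imp fun _ h => ⟨h.1, h.2.1, h.2.2.le⟩⟩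
  t := fun e => ⟨A.t e.1, by
    obtain ⟨l, h1, h2, h3⟩ := e.2
    exact ⟨l ++ [e.1], pathFrom_append_single h1 h2.symm, by simp,
      by simp only [List.length_append, List.length_singleton]; omega⟩⟩
  root := ⟨v, [], A.pathFrom_nil v, rfl, Nat.zero_le d⟩

/-- The universal covering tree of `A`: vertices are the paths emanating from the root. -/
def cover (A : RGraph) : RGraph where
  V := {l : List A.E // A.PathFrom A.root l}
  E := {x : {l : List A.E // A.PathFrom A.root l} × A.E //
          A.s x.2 = A.pathTarget A.root x.1.1}
  s := fun x => x.1.1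
  t := fun x => ⟨x.1.1.1 ++ [x.1.2], pathFrom_append_single x.1.1.2 x.2⟩
  root := ⟨[], A.pathFrom_nil _⟩

end RGraph

/-- A morphism of rooted directed multigraphs. -/
structure GraphHom (A B : RGraph) where
  v : A.V → B.V
  e : A.E → B.E
  root_eq : v A.root = B.root
  s_eq : ∀ x, B.s (e x) = v (A.s x)
  t_eq : ∀ x, B.t (e x) = v (A.t x)

namespace GraphHom

variable {A B : RGraph}

/-- The unique path lifting property. -/
def UPLP (p : GraphHom A B) : Prop :=
  ∀ (q : A.V) (l' : List B.E), B.PathFrom (p.v q) l' →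
    ∃! l : List A.E, A.PathFrom q l ∧ l.map p.e = l'

/-- A covering morphism: surjective on vertices, with the unique path lifting property. -/
def IsCovering (p : GraphHom A B) : Prop := Function.Surjective p.v ∧ p.UPLP

/-- An isomorphism of graphs: bijective on vertices and on edges. -/
def IsIso (p : GraphHom A B) : Prop := Function.Bijective p.v ∧ Function.Bijective p.e

/-- The restriction of the edge map to the edges emanating from `q`. -/
def outMap (p : GraphHom A B) (q : A.V) :
    {e : A.E // A.s e = q} → {e' : B.E // B.s e' = p.v q} :=
  fun e => ⟨p.e e.1, by rw [p.s_eq, e.2]⟩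

lemma isPath_map (p : GraphHom A B) {l : List A.E} (h : A.IsPath l) :
    B.IsPath (l.map p.e) := by
  rw [RGraph.IsPath]
  exact (List.isChain_map ..).2 (List.IsChain.imp (fun a b hab => by rw [p.t_eq, p.s_eq, hab]) h)

lemma pathFrom_map (p : GraphHom A B) {q : A.V} {l : List A.E} (h : A.PathFrom q l) :
    B.PathFrom (p.v q) (l.map p.e) := by
  refine ⟨p.isPath_map h.1, ?_⟩
  intro f hf
  cases l with
  | nil => simp at hf
  | cons a l =>
    simp at hf
    subst hf
    rw [p.s_eq, h.2 a (by simp)]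

lemma pathTarget_map (p : GraphHom A B) (q : A.V) (l : List A.E) :
    B.pathTarget (p.v q) (l.map p.e) = p.v (A.pathTarget q l) := by
  induction l generalizing q with
  | nil => rfl
  | cons a l ih =>
    show B.pathTarget (B.t (p.e a)) (l.map p.e) = _
    rw [p.t_eq]
    exact ih (A.t a)

lemma reach_map (p : GraphHom A B) {q w : A.V} (h : A.Reach q w) :
    B.Reach (p.v q) (p.v w) := by
  obtain ⟨l, hl, ht⟩ := h
  exact ⟨l.map p.e, p.pathFrom_map hl, by rw [p.pathTarget_map, ht]⟩

end GraphHom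

/-- Two graphs are isomorphic. -/
def RGraph.Iso (A B : RGraph) : Prop := ∃ p : GraphHom A B, p.IsIso

/-- The universal covering morphism from the universal covering tree of `A` to `A`. -/
def RGraph.uCover (A : RGraph) : GraphHom A.cover A where
  v := fun l => A.pathTarget A.root l.1
  e := fun x => x.1.2
  root_eq := rfl
  s_eq := fun x => x.2
  t_eq := fun x => by
    show A.t x.1.2 = A.pathTarget A.root (x.1.1.1 ++ [x.1.2])
    simp

/-- The morphism induced between universal covering trees by a morphism of graphs. -/
def GraphHom.coverMap {A B : RGraph} (p : GraphHom A B) : GraphHom A.cover B.cover where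
  v := fun l => ⟨l.1.map p.e, by have := p.pathFrom_map l.2; rwa [p.root_eq] at this⟩
  e := fun x =>
    ⟨(⟨x.1.1.1.map p.e, by have := p.pathFrom_map x.1.1.2; rwa [p.root_eq] at this⟩,
      p.e x.1.2), by
        show B.s (p.e x.1.2) = B.pathTarget B.root (x.1.1.1.map p.e)
        rw [p.s_eq, x.2, ← p.root_eq, p.pathTarget_map]⟩
  root_eq := Subtype.ext rfl
  s_eq := fun _ => rfl
  t_eq := fun x => by
    apply Subtype.ext
    simp [RGraph.cover]

/-- `A` is a covering quotient of `T`. -/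
def IsCovQuotient (T A : RGraph) : Prop := ∃ p : GraphHom T A, p.IsCovering

/-- `A` is a minimal covering quotient of `T`: a covering quotient with the minimal
number of vertices among all covering quotients of `T`. -/
def IsMinCovQuotient (T A : RGraph) : Prop :=
  IsCovQuotient T A ∧
    ∀ B : RGraph, IsCovQuotient T B → Cardinal.mk A.V ≤ Cardinal.mk B.V

/-- `T` has finitely many cone types. -/
def FinManyCones (T : RGraph) : Prop :=
  ∃ S : Set T.V, S.Finite ∧ ∀ v : T.V, ∃ w ∈ S, RGraph.Iso (T.subgraph v) (T.subgraph w)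

/-- A self-similar tree: a locally finite tree with finitely many cone types. -/
def SelfSimilarTree (T : RGraph) : Prop := T.IsTree ∧ T.LocallyFinite ∧ FinManyCones T

namespace RGraph

/-- The automorphism group of a graph, realized as the group of root-preserving,
adjacency-preserving permutations of the vertex set (for trees this is the same as the
automorphism group in the sense of graph morphisms, since in a tree an edge is determined
by its endpoints). -/
def autGroup (T : RGraph) : Subgroup (Equiv.Perm T.V) where
  carrier := {g | g T.root = T.root ∧ ∀ v w, T.Adj v w ↔ T.Adj (g v) (g w)}
  one_mem' := ⟨rfl, fun _ _ => Iff.rfl⟩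
  mul_mem' := by
    rintro a b ⟨ha1, ha2⟩ ⟨hb1, hb2⟩
    refine ⟨?_, fun v w => ?_⟩
    · show a (b T.root) = T.root
      rw [hb1, ha1]
    · exact (hb2 v w).trans (ha2 (b v) (b w))
  inv_mem' := by
    rintro a ⟨ha1, ha2⟩
    refine ⟨?_, fun v w => ?_⟩
    · show a.symm T.root = T.root
      rw [Equiv.symm_apply_eq]
      exact ha1.symm
    · have h := ha2 (a⁻¹ v) (a⁻¹ w)
      simpa using h.symm

/-- The subgroup of permutations of the vertices fixing every vertex outside
of the cone at `v`. -/
def fixOutside (T : RGraph) (v : T.V) : Subgroup (Equiv.Perm T.V) where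
  carrier := {g | ∀ w, ¬ T.Reach v w → g w = w}
  one_mem' := fun _ _ => rfl
  mul_mem' := by
    intro a b ha hb w hw
    show a (b w) = w
    rw [hb w hw, ha w hw]
  inv_mem' := by
    intro a ha w hw
    show a.symm w = w
    rw [Equiv.symm_apply_eq]
    exact (ha w hw).symm

/-- The rigid stabilizer of the vertex `v`: automorphisms fixing every vertex
outside the subtree spanned by `v` and its descendants. -/
def rist (T : RGraph) (v : T.V) : Subgroup (Equiv.Perm T.V) :=
  T.autGroup ⊓ T.fixOutside v

/-- The set of vertices at distance `n` from the root. -/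
def level (T : RGraph) (n : ℕ) : Set T.V :=
  {v | ∃ l : List T.E, T.PathFrom T.root l ∧ T.pathTarget T.root l = v ∧ l.length = n}

/-- The `n`-th rigid level stabilizer: the subgroup generated by the rigid stabilizers
of the vertices at distance `n` from the root. -/
def ristLevel (T : RGraph) (n : ℕ) : Subgroup (Equiv.Perm T.V) :=
  ⨆ v ∈ T.level n, T.rist v

/-- The `n`-th rigid level stabilizer, as a subgroup of the automorphism group. -/
def ristIn (T : RGraph) (n : ℕ) : Subgroup ↥T.autGroup :=
  (T.ristLevel n).comap T.autGroup.subtype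

end RGraph

/-- A recurrent double edge: a pair of distinct parallel edges such that there is an
oriented loop which contains one of them, or from which their common source can be
reached. -/
def HasRecDoubleEdge (A : RGraph) : Prop :=
  ∃ e₁ e₂ : A.E, e₁ ≠ e₂ ∧ A.s e₁ = A.s e₂ ∧ A.t e₁ = A.t e₂ ∧
    ((∃ (q : A.V) (l : List A.E),
        A.PathFrom q l ∧ l ≠ [] ∧ A.pathTarget q l = q ∧ (e₁ ∈ l ∨ e₂ ∈ l)) ∨
     (∃ (q : A.V) (l : List A.E),
        A.PathFrom q l ∧ l ≠ [] ∧ A.pathTarget q l = q ∧ A.Reach q (A.s e₁)))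

/-- A deterministic finite automaton over the alphabet `A`, with a partial transition
function, a single initial state, and all states accepting. -/
structure PDFA (A : Type) where
  Q : Type
  finQ : Finite Q
  neQ : Nonempty Q
  δ : Q → A → Option Q
  init : Q

namespace PDFA

variable {A : Type} (M : PDFA A)

/-- Running the automaton from state `q` on a word; `none` if it gets stuck. -/
def run : M.Q → List A → Option M.Q
  | q, [] => some q
  | q, a :: w => (M.δ q a).bind fun q' => run q' w

/-- The regular language accepted by `M`. -/
def Lang : Set (List A) := {w | (M.run M.init w).isSome}

lemma run_append (q : M.Q) (u w : List A) :
    M.run q (u ++ w) = (M.run q u).bind fun q' => M.run q' w := by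
  induction u generalizing q with
  | nil => simp [run]
  | cons a u ih =>
    simp only [List.cons_append, run]
    cases M.δ q a with
    | none => simp
    | some q' => simp [ih]

lemma isSome_of_append {q : M.Q} {u w : List A}
    (h : (M.run q (u ++ w)).isSome) : (M.run q u).isSome := by
  rw [run_append] at h
  cases hu : M.run q u with
  | none => rw [hu] at h; simp at h
  | some q' => simp

/-- The path language tree of `M`: the tree whose vertices are the words of the
language of `M`, with an edge from `w` to `w ++ [a]` whenever both belong to the
language. -/
def pathTree : RGraph where
  V := {w : List A // (M.run M.init w).isSome}
  E := {x : List A × A // (M.run M.init (x.1 ++ [x.2])).isSome}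
  s := fun x => ⟨x.1.1, M.isSome_of_append x.2⟩
  t := fun x => ⟨x.1.1 ++ [x.1.2], x.2⟩
  root := ⟨[], by simp [run]⟩

/-- The underlying rooted directed multigraph of the automaton `M`. -/
def underlying : RGraph where
  V := M.Q
  E := {x : M.Q × A // (M.δ x.1 x.2).isSome}
  s := fun x => x.1.1
  t := fun x => (M.δ x.1.1 x.1.2).get x.2
  root := M.init

/-- `M` is geometrically minimal: it has the minimal number of states among all DFAs
(over arbitrary finite nonempty alphabets) whose path language trees are isomorphic,
as unlabelled rooted trees, to the path language tree of `M`. -/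
def GeomMinimal : Prop :=
  ∀ (B : Type), Finite B → Nonempty B → ∀ N : PDFA B,
    RGraph.Iso M.pathTree N.pathTree → Nat.card M.Q ≤ Nat.card N.Q

/-- The state reached after reading the word `w` of the language. -/
def qstate (w : List A) (h : (M.run M.init w).isSome) : M.Q :=
  (M.run M.init w).get h

/-- The group of admissible permutations at the state `q`: permutations `τ` of the
alphabet fixing the letters outside `Σ(q)` and satisfying `δ(q, τ a) = δ(q, a)`. -/
def SymQ (q : M.Q) : Subgroup (Equiv.Perm A) where
  carrier := {τ | ∀ a, M.δ q (τ a) = M.δ q a ∧ (M.δ q a = none → τ a = a)}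
  one_mem' := fun _ => ⟨rfl, fun _ => rfl⟩
  mul_mem' := by
    intro τ₁ τ₂ h1 h2 a
    constructor
    · show M.δ q (τ₁ (τ₂ a)) = M.δ q a
      rw [(h1 (τ₂ a)).1, (h2 a).1]
    · intro hn
      show τ₁ (τ₂ a) = a
      rw [(h2 a).2 hn, (h1 a).2 hn]
  inv_mem' := by
    intro τ h a
    have h1 := (h (τ.symm a)).1
    rw [Equiv.apply_symm_apply] at h1
    constructor
    · show M.δ q (τ.symm a) = M.δ q a
      exact h1.symm
    · intro hn
      have h2 := (h (τ.symm a)).2 (h1.symm.trans hn)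
      rw [Equiv.apply_symm_apply] at h2
      show τ.symm a = a
      exact h2.symm

end PDFA

/-- Extending a portrait to a map on words (the first argument is the accumulated
prefix): the `i`-th letter of the image word is the image of the `i`-th letter under
the local injection at the prefix of length `i - 1`. -/
def portraitExtend {A : Type} (σ : List A → A → A) : List A → List A → List A
  | _, [] => []
  | pre, a :: w => σ pre a :: portraitExtend σ (pre ++ [a]) w



section Aux

namespace RGraph

lemma pathFrom_cons {A : RGraph} {q : A.V} {a : A.E} {l : List A.E} :
    A.PathFrom q (a :: l) ↔ A.s a = q ∧ A.PathFrom (A.t a) l := by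
  constructor
  · rintro ⟨h1, h2⟩
    simp only [RGraph.IsPath, List.Chain', List.isChain_cons] at h1
    exact ⟨h2 a (by simp), h1.2, fun e he => (h1.1 e he).symm⟩
  · rintro ⟨hs, h1, h2⟩
    refine ⟨by simp only [RGraph.IsPath, List.Chain', List.isChain_cons]; exact ⟨fun e he => (h2 e he).symm, h1⟩, ?_⟩
    intro e he; simp at he; subst he; exact hs

lemma pathFrom_append {A : RGraph} {q : A.V} {l₁ l₂ : List A.E}
    (h₁ : A.PathFrom q l₁) (h₂ : A.PathFrom (A.pathTarget q l₁) l₂) :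
    A.PathFrom q (l₁ ++ l₂) := by
  induction l₁ generalizing q with
  | nil => simpa using h₂
  | cons a l ih =>
    rw [pathFrom_cons] at h₁
    rw [List.cons_append, pathFrom_cons]
    exact ⟨h₁.1, ih h₁.2 (by simpa using h₂)⟩

lemma pathFrom_append_split {A : RGraph} {q : A.V} {l₁ l₂ : List A.E}
    (h : A.PathFrom q (l₁ ++ l₂)) :
    A.PathFrom q l₁ ∧ A.PathFrom (A.pathTarget q l₁) l₂ := by
  induction l₁ generalizing q with
  | nil =>
    refine ⟨A.pathFrom_nil q, ?_⟩; simpa using h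
  | cons a l ih =>
    rw [List.cons_append, pathFrom_cons] at h
    obtain ⟨hs, h⟩ := h
    obtain ⟨ha, hb⟩ := ih h
    exact ⟨pathFrom_cons.mpr ⟨hs, ha⟩, by simpa using hb⟩

lemma reach_trans {A : RGraph} {q w x : A.V} (h₁ : A.Reach q w) (h₂ : A.Reach w x) :
    A.Reach q x := by
  obtain ⟨l₁, hl₁, ht₁⟩ := h₁
  obtain ⟨l₂, hl₂, ht₂⟩ := h₂
  subst ht₁
  exact ⟨l₁ ++ l₂, pathFrom_append hl₁ hl₂, by rw [pathTarget_append, ht₂]⟩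

end RGraph

namespace GraphHom

/-- Identity morphism. -/
def idHom (A : RGraph) : GraphHom A A :=
  ⟨id, id, rfl, fun _ => rfl, fun _ => rfl⟩

/-- Composition of morphisms. -/
def comp {A B C : RGraph} (p : GraphHom A B) (q : GraphHom B C) : GraphHom A C where
  v := q.v ∘ p.v
  e := q.e ∘ p.e
  root_eq := by simp [Function.comp, p.root_eq, q.root_eq]
  s_eq := fun x => by simp [Function.comp, q.s_eq, p.s_eq]
  t_eq := fun x => by simp [Function.comp, q.t_eq, p.t_eq]

lemma comp_isIso {A B C : RGraph} {p : GraphHom A B} {q : GraphHom B C}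
    (hp : p.IsIso) (hq : q.IsIso) : (p.comp q).IsIso :=
  ⟨hq.1.comp hp.1, hq.2.comp hp.2⟩

/-- Inverse of an isomorphism. -/
noncomputable def inv {A B : RGraph} (p : GraphHom A B) (h : p.IsIso) : GraphHom B A where
  v := (Equiv.ofBijective p.v h.1).symm
  e := (Equiv.ofBijective p.e h.2).symm
  root_eq := by
    rw [Equiv.symm_apply_eq]
    exact p.root_eq.symm
  s_eq := fun x => by
    apply h.1.injective
    have h1 : p.v ((Equiv.ofBijective p.v h.1).symm (B.s x)) = B.s x :=
      (Equiv.ofBijective p.v h.1).apply_symm_apply (B.s x)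
    have h2 : p.e ((Equiv.ofBijective p.e h.2).symm x) = x :=
      (Equiv.ofBijective p.e h.2).apply_symm_apply x
    rw [h1, ← p.s_eq, h2]
  t_eq := fun x => by
    apply h.1.injective
    have h1 : p.v ((Equiv.ofBijective p.v h.1).symm (B.t x)) = B.t x :=
      (Equiv.ofBijective p.v h.1).apply_symm_apply (B.t x)
    have h2 : p.e ((Equiv.ofBijective p.e h.2).symm x) = x :=
      (Equiv.ofBijective p.e h.2).apply_symm_apply x
    rw [h1, ← p.t_eq, h2]

@[simp] lemma inv_v_apply {A B : RGraph} (p : GraphHom A B) (h : p.IsIso) (x : A.V) :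
    (p.inv h).v (p.v x) = x :=
  (Equiv.ofBijective p.v h.1).symm_apply_apply x

@[simp] lemma v_inv_apply {A B : RGraph} (p : GraphHom A B) (h : p.IsIso) (y : B.V) :
    p.v ((p.inv h).v y) = y :=
  (Equiv.ofBijective p.v h.1).apply_symm_apply y

@[simp] lemma inv_e_apply {A B : RGraph} (p : GraphHom A B) (h : p.IsIso) (x : A.E) :
    (p.inv h).e (p.e x) = x :=
  (Equiv.ofBijective p.e h.2).symm_apply_apply x

@[simp] lemma e_inv_apply {A B : RGraph} (p : GraphHom A B) (h : p.IsIso) (y : B.E) :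
    p.e ((p.inv h).e y) = y :=
  (Equiv.ofBijective p.e h.2).apply_symm_apply y

lemma inv_isIso {A B : RGraph} (p : GraphHom A B) (h : p.IsIso) : (p.inv h).IsIso :=
  ⟨(Equiv.ofBijective p.v h.1).symm.bijective, (Equiv.ofBijective p.e h.2).symm.bijective⟩

end GraphHom

namespace RGraph

lemma Iso.refl (A : RGraph) : RGraph.Iso A A :=
  ⟨GraphHom.idHom A, Function.bijective_id, Function.bijective_id⟩

lemma Iso.symm {A B : RGraph} (h : RGraph.Iso A B) : RGraph.Iso B A := by
  obtain ⟨p, hp⟩ := h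
  exact ⟨p.inv hp, p.inv_isIso hp⟩

lemma Iso.trans {A B C : RGraph} (h₁ : RGraph.Iso A B) (h₂ : RGraph.Iso B C) :
    RGraph.Iso A C := by
  obtain ⟨p, hp⟩ := h₁
  obtain ⟨q, hq⟩ := h₂
  exact ⟨p.comp q, GraphHom.comp_isIso hp hq⟩

end RGraph

namespace RGraph

lemma subgraph_pathFrom_map {T : RGraph} {v : T.V} {x : (T.subgraph v).V}
    {L : List (T.subgraph v).E} (h : (T.subgraph v).PathFrom x L) :
    T.PathFrom x.1 (L.map Subtype.val) ∧
      ((T.subgraph v).pathTarget x L).1 = T.pathTarget x.1 (L.map Subtype.val) := by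
  induction L generalizing x with
  | nil => exact ⟨T.pathFrom_nil x.1, rfl⟩
  | cons a L ih =>
    rw [pathFrom_cons] at h
    obtain ⟨hs, h⟩ := h
    obtain ⟨h1, h2⟩ := ih h
    refine ⟨pathFrom_cons.mpr ⟨?_, h1⟩, ?_⟩
    · exact congrArg Subtype.val hs
    · exact h2

lemma subgraph_reach_iff {T : RGraph} {v : T.V} (x y : (T.subgraph v).V) :
    (T.subgraph v).Reach x y ↔ T.Reach x.1 y.1 := by
  constructor
  · rintro ⟨L, hL, ht⟩
    obtain ⟨h1, h2⟩ := subgraph_pathFrom_map hL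
    exact ⟨L.map Subtype.val, h1, by rw [← h2, ht]⟩
  · rintro ⟨l, hl, ht⟩
    suffices h : ∀ l, T.PathFrom x.1 l →
        ∃ z : (T.subgraph v).V, (T.subgraph v).Reach x z ∧ z.1 = T.pathTarget x.1 l by
      obtain ⟨z, hz, hz1⟩ := h l hl
      have : z = y := Subtype.ext (by rw [hz1, ht])
      rwa [this] at hz
    intro l
    induction l using List.reverseRecOn with
    | nil => exact fun _ => ⟨x, (T.subgraph v).reach_self x, rfl⟩
    | append_singleton l e ih =>
      intro hl
      obtain ⟨hl1, hl2⟩ := pathFrom_append_split hl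
      obtain ⟨z, hz, hz1⟩ := ih hl1
      have hse : T.Reach v (T.s e) := by
        refine reach_trans x.2 ?_
        refine ⟨l, hl1, ?_⟩
        rw [pathFrom_cons] at hl2
        exact hl2.1.symm
      refine ⟨(T.subgraph v).t (⟨e, hse⟩ : {e : T.E // T.Reach v (T.s e)}), ?_, by simp [subgraph]⟩
      refine reach_target (A := T.subgraph v) (e := ⟨e, hse⟩) ?_
      have : (T.subgraph v).s (⟨e, hse⟩ : {e : T.E // T.Reach v (T.s e)}) = z := by
        apply Subtype.ext
        show T.s e = z.1
        rw [hz1]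
        rw [pathFrom_cons] at hl2
        exact hl2.1
      rwa [this]

/-- The cone at a vertex of a cone is isomorphic to the cone at that vertex in the
ambient graph. -/
lemma subgraph_subgraph_iso (T : RGraph) (v : T.V) (w : (T.subgraph v).V) :
    RGraph.Iso ((T.subgraph v).subgraph w) (T.subgraph w.1) := by
  refine ⟨⟨fun y => ⟨y.1.1, (subgraph_reach_iff w y.1).mp y.2⟩,
    fun x => ⟨x.1.1, (subgraph_reach_iff w _).mp x.2⟩,
    rfl, fun x => rfl, fun x => rfl⟩, ?_⟩
  refine ⟨⟨?_, ?_⟩, ?_, ?_⟩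
  · intro a b hab
    have h := Subtype.ext_iff.mp hab
    exact Subtype.ext (Subtype.ext h)
  · rintro ⟨z, hz⟩
    exact ⟨⟨⟨z, reach_trans w.2 hz⟩, (subgraph_reach_iff w _).mpr hz⟩, rfl⟩
  · intro a b hab
    have h := Subtype.ext_iff.mp hab
    exact Subtype.ext (Subtype.ext h)
  · rintro ⟨e, he⟩
    refine ⟨⟨⟨e, reach_trans w.2 he⟩, (subgraph_reach_iff w _).mpr he⟩, rfl⟩

/-- An isomorphism of graphs induces isomorphisms of cones. -/
lemma iso_subgraph {A B : RGraph} (p : GraphHom A B) (hp : p.IsIso) (v : A.V) :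
    RGraph.Iso (A.subgraph v) (B.subgraph (p.v v)) := by
  refine ⟨⟨fun w => ⟨p.v w.1, p.reach_map w.2⟩,
    fun x => ⟨p.e x.1, by rw [p.s_eq]; exact p.reach_map x.2⟩,
    Subtype.ext rfl, fun x => Subtype.ext (p.s_eq x.1),
    fun x => Subtype.ext (p.t_eq x.1)⟩, ?_⟩
  refine ⟨⟨?_, ?_⟩, ?_, ?_⟩
  · intro a b hab
    have h := Subtype.ext_iff.mp hab
    exact Subtype.ext (hp.1.injective h)
  · rintro ⟨y, hy⟩
    refine ⟨⟨(p.inv hp).v y, ?_⟩, Subtype.ext (by simp)⟩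
    have := (p.inv hp).reach_map hy
    rwa [GraphHom.inv_v_apply] at this
  · intro a b hab
    have h := Subtype.ext_iff.mp hab
    exact Subtype.ext (hp.2.injective h)
  · rintro ⟨f, hf⟩
    refine ⟨⟨(p.inv hp).e f, ?_⟩, Subtype.ext (by simp)⟩
    have h1 := (p.inv hp).reach_map hf
    rw [GraphHom.inv_v_apply, ← (p.inv hp).s_eq] at h1
    exact h1

end RGraph

namespace GraphHom

lemma outMap_inj {T A : RGraph} {p : GraphHom T A}
    (hout : ∀ q, Function.Bijective (p.outMap q)) {q : T.V} {a a' : T.E}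
    (ha : T.s a = q) (ha' : T.s a' = q) (h : p.e a = p.e a') : a = a' := by
  have := (hout q).1 (a₁ := ⟨a, ha⟩) (a₂ := ⟨a', ha'⟩) (Subtype.ext h)
  exact Subtype.ext_iff.mp this

lemma map_unique {T A : RGraph} {p : GraphHom T A}
    (hout : ∀ q, Function.Bijective (p.outMap q)) :
    ∀ {l l' : List T.E} {q : T.V}, T.PathFrom q l → T.PathFrom q l' →
      l.map p.e = l'.map p.e → l = l' := by
  intro l
  induction l with
  | nil =>
    intro l' q _ _ h
    simpa using (List.map_eq_nil_iff.mp h.symm)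
  | cons a l ih =>
    intro l' q hl hl' h
    cases l' with
    | nil => simp at h
    | cons a' l' =>
      simp only [List.map_cons, List.cons.injEq] at h
      rw [RGraph.pathFrom_cons] at hl hl'
      have haa : a = a' := outMap_inj hout hl.1 hl'.1 h.1
      subst haa
      exact congrArg (a :: ·) (ih hl.2 hl'.2 h.2)

lemma lift_exists {T A : RGraph} {p : GraphHom T A}
    (hout : ∀ q, Function.Bijective (p.outMap q)) :
    ∀ (l' : List A.E) (q : T.V), A.PathFrom (p.v q) l' →
      ∃ l, T.PathFrom q l ∧ l.map p.e = l' := by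
  intro l'
  induction l' with
  | nil => exact fun q _ => ⟨[], T.pathFrom_nil q, rfl⟩
  | cons a' l' ih =>
    intro q hl'
    rw [RGraph.pathFrom_cons] at hl'
    obtain ⟨⟨a, ha⟩, heq⟩ := (hout q).2 ⟨a', hl'.1⟩
    have heval : p.e a = a' := Subtype.ext_iff.mp heq
    have ht : A.t a' = p.v (T.t a) := by rw [← heval, p.t_eq]
    obtain ⟨l, hl, hmap⟩ := ih (T.t a) (by rw [← ht]; exact hl'.2)
    exact ⟨a :: l, RGraph.pathFrom_cons.mpr ⟨ha, hl⟩, by simp [heval, hmap]⟩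

end GraphHom

namespace RGraph

lemma uCover_isIso {T : RGraph} (hT : T.IsTree) : T.uCover.IsIso := by
  refine ⟨hT, ?_, ?_⟩
  · intro x y hxy
    have hxy' : x.1.2 = y.1.2 := hxy
    have h1 : T.pathTarget T.root x.1.1.1 = T.pathTarget T.root y.1.1.1 := by
      rw [← x.2, ← y.2, hxy']
    have h2 : x.1.1 = y.1.1 := hT.1 h1
    apply Subtype.ext
    exact Prod.ext h2 hxy'
  · intro e
    obtain ⟨l, hl⟩ := hT.2 (T.s e)
    exact ⟨⟨(l, e), hl.symm⟩, rfl⟩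

lemma coverMap_isIso {T A : RGraph} (p : GraphHom T A)
    (hout : ∀ q, Function.Bijective (p.outMap q)) : p.coverMap.IsIso := by
  refine ⟨⟨?_, ?_⟩, ?_, ?_⟩
  · intro x y h
    have h' := Subtype.ext_iff.mp h
    have hx : T.PathFrom T.root x.1 := x.2
    have hy : T.PathFrom T.root y.1 := y.2
    exact Subtype.ext (GraphHom.map_unique hout hx hy h')
  · rintro ⟨m, hm⟩
    have hm' : A.PathFrom (p.v T.root) m := by rw [p.root_eq]; exact hm
    obtain ⟨l, hl, hmap⟩ := GraphHom.lift_exists hout m T.root hm'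
    exact ⟨⟨l, hl⟩, Subtype.ext hmap⟩
  · intro x y h
    have h' := Subtype.ext_iff.mp h
    have h1 := congrArg Prod.fst h'
    have h1' := Subtype.ext_iff.mp h1
    have h2 := congrArg Prod.snd h'
    have hll : x.1.1.1 = y.1.1.1 :=
      GraphHom.map_unique hout x.1.1.2 y.1.1.2 h1'
    have hs : T.s x.1.2 = T.pathTarget T.root x.1.1.1 := x.2
    have hs' : T.s y.1.2 = T.pathTarget T.root x.1.1.1 := by rw [hll]; exact y.2
    have hee : x.1.2 = y.1.2 := GraphHom.outMap_inj hout hs hs' h2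
    exact Subtype.ext (Prod.ext (Subtype.ext hll) hee)
  · intro F
    have hm' : A.PathFrom (p.v T.root) F.1.1.1 := by rw [p.root_eq]; exact F.1.1.2
    obtain ⟨l, hl, hmap⟩ := GraphHom.lift_exists hout F.1.1.1 T.root hm'
    have hsF : A.s F.1.2 = p.v (T.pathTarget T.root l) := by
      rw [F.2, ← hmap, ← p.root_eq, p.pathTarget_map]
    obtain ⟨⟨e, he⟩, heq⟩ := (hout (T.pathTarget T.root l)).2 ⟨F.1.2, hsF⟩
    have heval : p.e e = F.1.2 := Subtype.ext_iff.mp heq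
    refine ⟨⟨((⟨l, hl⟩ : T.cover.V), e), he⟩, ?_⟩
    apply Subtype.ext
    exact Prod.ext (Subtype.ext hmap) heval

lemma iso_cover_of_outMap {T A : RGraph} (hT : T.IsTree) (p : GraphHom T A)
    (hout : ∀ q, Function.Bijective (p.outMap q)) : RGraph.Iso T A.cover :=
  RGraph.Iso.trans (RGraph.Iso.symm ⟨T.uCover, uCover_isIso hT⟩)
    ⟨p.coverMap, coverMap_isIso p hout⟩

end RGraph

namespace RGraph

lemma cover_pathFrom_ext {A : RGraph} (l : A.cover.V) :
    ∀ (L : List A.cover.E), A.cover.PathFrom l L →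
      ∃ ext, A.PathFrom (A.pathTarget A.root l.1) ext ∧
        (A.cover.pathTarget l L).1 = l.1 ++ ext := by
  intro L
  induction L using List.reverseRecOn with
  | nil => exact fun _ => ⟨[], A.pathFrom_nil _, by simp⟩
  | append_singleton L E ih =>
    intro hL
    obtain ⟨h1, h2⟩ := pathFrom_append_split hL
    obtain ⟨ext, hext, hlist⟩ := ih h1
    rw [pathFrom_cons] at h2
    have h3 : E.1.1.1 = l.1 ++ ext := by
      rw [← hlist]
      exact congrArg Subtype.val h2.1
    refine ⟨ext ++ [E.1.2], ?_, ?_⟩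
    · refine pathFrom_append_single hext ?_
      have he : A.s E.1.2 = A.pathTarget A.root E.1.1.1 := E.2
      rw [he, h3, pathTarget_append]
    · rw [pathTarget_append_single]
      show E.1.1.1 ++ [E.1.2] = _
      rw [h3, List.append_assoc]

lemma cover_reach_ext {A : RGraph} (l : A.cover.V) :
    ∀ (ext : List A.E) (h : A.PathFrom (A.pathTarget A.root l.1) ext),
      A.cover.Reach l ⟨l.1 ++ ext, pathFrom_append l.2 h⟩ := by
  intro ext
  induction ext using List.reverseRecOn with
  | nil =>
    intro h
    have he : (⟨l.1 ++ [], pathFrom_append l.2 h⟩ : A.cover.V) = l :=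
      Subtype.ext (List.append_nil _)
    rw [he]
    exact A.cover.reach_self l
  | append_singleton ext e ih =>
    intro h
    obtain ⟨h1, h2⟩ := pathFrom_append_split h
    rw [pathFrom_cons] at h2
    have hse : A.s e = A.pathTarget A.root
        ((⟨l.1 ++ ext, pathFrom_append l.2 h1⟩ : A.cover.V) : List A.E) := by
      show A.s e = A.pathTarget A.root (l.1 ++ ext)
      rw [pathTarget_append]
      exact h2.1
    have hE := reach_target (A := A.cover)
      (e := ⟨((⟨l.1 ++ ext, pathFrom_append l.2 h1⟩ : A.cover.V), e), hse⟩) (ih h1)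
    have he2 : (A.cover.t ⟨((⟨l.1 ++ ext, pathFrom_append l.2 h1⟩ : A.cover.V), e), hse⟩ :
        A.cover.V) = ⟨l.1 ++ (ext ++ [e]), pathFrom_append l.2 h⟩ :=
      Subtype.ext (List.append_assoc _ _ _)
    rwa [he2] at hE

lemma cover_reach_iff {A : RGraph} (l m : A.cover.V) :
    A.cover.Reach l m ↔
      ∃ ext, A.PathFrom (A.pathTarget A.root l.1) ext ∧ m.1 = l.1 ++ ext := by
  constructor
  · rintro ⟨L, hL, ht⟩
    obtain ⟨ext, h1, h2⟩ := cover_pathFrom_ext l L hL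
    exact ⟨ext, h1, by rw [← ht]; exact h2⟩
  · rintro ⟨ext, h1, h2⟩
    have hm : m = ⟨l.1 ++ ext, pathFrom_append l.2 h1⟩ := Subtype.ext h2
    rw [hm]
    exact cover_reach_ext l ext h1

/-- Rerooting a graph. -/
@[reducible] def reroot (A : RGraph) (q : A.V) : RGraph := { A with root := q }

/-- A cone of a universal covering tree is isomorphic to the universal covering tree
of the rerooted graph. -/
lemma cover_subgraph_reroot_iso (A : RGraph) (l : A.cover.V) :
    RGraph.Iso (A.cover.subgraph l) ((A.reroot (A.pathTarget A.root l.1)).cover) := by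
  have key : ∀ (m : A.cover.V), A.cover.Reach l m →
      A.PathFrom (A.pathTarget A.root l.1) (m.1.drop l.1.length) ∧
        m.1 = l.1 ++ m.1.drop l.1.length := by
    intro m hm
    obtain ⟨ext, h1, h2⟩ := (cover_reach_iff l m).mp hm
    have hd : m.1.drop l.1.length = ext := by rw [h2]; simp
    rw [hd]
    exact ⟨h1, h2⟩
  refine ⟨⟨fun m => ⟨m.1.1.drop l.1.length, (key m.1 m.2).1⟩,
      fun x => ⟨(⟨x.1.1.1.1.drop l.1.length, (key x.1.1.1 x.2).1⟩, x.1.1.2), ?_⟩,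
      ?_, ?_, ?_⟩, ?_⟩
  · -- edge membership
    have h2 := (key x.1.1.1 x.2).2
    show A.s x.1.1.2 = A.pathTarget (A.pathTarget A.root l.1) (x.1.1.1.1.drop l.1.length)
    rw [← pathTarget_append, ← h2]
    exact x.1.2
  · -- root_eq
    apply Subtype.ext
    show l.1.drop l.1.length = []
    simp
  · -- s_eq
    intro x
    exact Subtype.ext rfl
  · -- t_eq
    intro x
    apply Subtype.ext
    show x.1.1.1.1.drop l.1.length ++ [x.1.1.2] = (x.1.1.1.1 ++ [x.1.1.2]).drop l.1.length
    have h2 := (key x.1.1.1 x.2).2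
    set d := x.1.1.1.1.drop l.1.length with hd
    conv_rhs => rw [h2]
    rw [List.append_assoc, List.drop_left]
  · -- bijectivity
    refine ⟨⟨?_, ?_⟩, ?_, ?_⟩
    · intro a b hab
      have h := Subtype.ext_iff.mp hab
      have ha := (key a.1 a.2).2
      have hb := (key b.1 b.2).2
      apply Subtype.ext
      apply Subtype.ext
      show a.1.1 = b.1.1
      rw [ha, hb]
      exact congrArg (l.1 ++ ·) h
    · rintro ⟨ext, hext⟩
      have hext' : A.PathFrom (A.pathTarget A.root l.1) ext := hext
      refine ⟨⟨⟨l.1 ++ ext, pathFrom_append l.2 hext'⟩,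
        (cover_reach_iff _ _).mpr ⟨ext, hext', rfl⟩⟩, ?_⟩
      apply Subtype.ext
      show (l.1 ++ ext).drop l.1.length = ext
      simp
    · intro a b hab
      have h' := Subtype.ext_iff.mp hab
      have h1 := congrArg Prod.fst h'
      have h1' := Subtype.ext_iff.mp h1
      have h2 := congrArg Prod.snd h'
      have ha := (key a.1.1.1 a.2).2
      have hb := (key b.1.1.1 b.2).2
      have hlist : a.1.1.1.1 = b.1.1.1.1 := by
        rw [ha, hb]
        exact congrArg (l.1 ++ ·) h1'
      apply Subtype.ext
      apply Subtype.ext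
      exact Prod.ext (Subtype.ext hlist) h2
    · rintro ⟨⟨⟨ext, hext⟩, e⟩, he⟩
      have hext' : A.PathFrom (A.pathTarget A.root l.1) ext := hext
      have he' : A.s e = A.pathTarget (A.pathTarget A.root l.1) ext := he
      have hhe : A.s e = A.pathTarget A.root (l.1 ++ ext) := by
        rw [pathTarget_append]
        exact he'
      refine ⟨⟨⟨((⟨l.1 ++ ext, pathFrom_append l.2 hext'⟩ : A.cover.V), e), hhe⟩,
        (cover_reach_iff _ _).mpr ⟨ext, hext', rfl⟩⟩, ?_⟩
      apply Subtype.ext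
      refine Prod.ext (Subtype.ext ?_) rfl
      show (l.1 ++ ext).drop l.1.length = ext
      simp

/-- Cones of a universal covering tree at vertices with the same target are
isomorphic. -/
lemma cover_subgraph_iso {A : RGraph} (l l' : A.cover.V)
    (h : A.pathTarget A.root l.1 = A.pathTarget A.root l'.1) :
    RGraph.Iso (A.cover.subgraph l) (A.cover.subgraph l') := by
  refine (cover_subgraph_reroot_iso A l).trans ?_
  rw [h]
  exact (cover_subgraph_reroot_iso A l').symm

end RGraph

namespace RGraph

/-- The setoid on vertices identifying vertices with isomorphic cones. -/
def coneSetoid (T : RGraph) : Setoid T.V where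
  r v w := RGraph.Iso (T.subgraph v) (T.subgraph w)
  iseqv := ⟨fun v => RGraph.Iso.refl _, RGraph.Iso.symm, RGraph.Iso.trans⟩

/-- The quotient graph of cone types. -/
def coneQuot (T : RGraph) : RGraph where
  V := Quotient T.coneSetoid
  E := {e : T.E // T.s e = (Quotient.mk T.coneSetoid (T.s e)).out}
  s e := Quotient.mk T.coneSetoid (T.s e.1)
  t e := Quotient.mk T.coneSetoid (T.t e.1)
  root := Quotient.mk T.coneSetoid T.root

/-- A chosen isomorphism from the cone at `w` to the cone at the representative of
the cone type of `w`. -/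
noncomputable def coneHom (T : RGraph) (w : T.V) :
    GraphHom (T.subgraph w) (T.subgraph (Quotient.mk T.coneSetoid w).out) :=
  (Quotient.mk_out (s := T.coneSetoid) w).symm.choose

lemma coneHom_isIso (T : RGraph) (w : T.V) : (T.coneHom w).IsIso :=
  (Quotient.mk_out (s := T.coneSetoid) w).symm.choose_spec

lemma out_out_eq (T : RGraph) (w : T.V) :
    (Quotient.mk T.coneSetoid ((Quotient.mk T.coneSetoid w).out)).out =
      (Quotient.mk T.coneSetoid w).out := by
  rw [Quotient.out_eq]

/-- The source of the image of an edge at the root of a cone. -/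
lemma coneHom_source (T : RGraph) (w : T.V) (x : (T.subgraph w).E)
    (hx : (T.subgraph w).s x = (T.subgraph w).root) :
    T.s ((T.coneHom w).e x).1 = (Quotient.mk T.coneSetoid w).out := by
  have h := (T.coneHom w).s_eq x
  rw [hx, (T.coneHom w).root_eq] at h
  exact congrArg Subtype.val h

/-- The image edge of `e` at the representative of its source's cone type. -/
noncomputable def quotEdge (T : RGraph) (w : T.V) (e : T.E) (he : T.s e = w) :
    T.coneQuot.E := by
  refine ⟨((T.coneHom w).e ⟨e, by rw [he]; exact T.reach_self w⟩).1, ?_⟩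
  have hs : T.s ((T.coneHom w).e ⟨e, by rw [he]; exact T.reach_self w⟩).1 =
      (Quotient.mk T.coneSetoid w).out := by
    apply coneHom_source
    apply Subtype.ext
    exact he
  rw [hs, out_out_eq]

/-- The cone type of the target of the transported edge equals the cone type of the
original target. -/
lemma quotEdge_target (T : RGraph) (w : T.V) (e : T.E) (he : T.s e = w) :
    Quotient.mk T.coneSetoid (T.t (T.quotEdge w e he).1) =
      Quotient.mk T.coneSetoid (T.t e) := by
  set c := T.coneHom w with hc
  set x : (T.subgraph w).E := ⟨e, by rw [he]; exact T.reach_self w⟩ with hx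
  have hval : (T.quotEdge w e he).1 = (c.e x).1 := rfl
  rw [hval]
  apply Quotient.sound
  have h1 : RGraph.Iso ((T.subgraph w).subgraph ((T.subgraph w).t x))
      ((T.subgraph (Quotient.mk T.coneSetoid w).out).subgraph
        ((T.subgraph (Quotient.mk T.coneSetoid w).out).t (c.e x))) := by
    have := iso_subgraph c (T.coneHom_isIso w) ((T.subgraph w).t x)
    rwa [← c.t_eq x] at this
  have h2 := subgraph_subgraph_iso T w ((T.subgraph w).t x)
  have h3 := subgraph_subgraph_iso T (Quotient.mk T.coneSetoid w).out
      ((T.subgraph (Quotient.mk T.coneSetoid w).out).t (c.e x))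
  have h4 : ((T.subgraph w).t x).1 = T.t e := rfl
  have h5 : ((T.subgraph (Quotient.mk T.coneSetoid w).out).t (c.e x)).1 =
      T.t (c.e x).1 := rfl
  rw [h4] at h2
  rw [h5] at h3
  exact (h3.symm.trans h1.symm).trans h2

/-- The quotient morphism from a graph to its graph of cone types. -/
noncomputable def quotHom (T : RGraph) : GraphHom T T.coneQuot where
  v w := Quotient.mk T.coneSetoid w
  e e := T.quotEdge (T.s e) e rfl
  root_eq := rfl
  s_eq := fun e => by
    show Quotient.mk T.coneSetoid (T.s (T.quotEdge (T.s e) e rfl).1) = _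
    have hs : T.s (T.quotEdge (T.s e) e rfl).1 = (Quotient.mk T.coneSetoid (T.s e)).out := by
      apply coneHom_source
      exact Subtype.ext rfl
    rw [hs, Quotient.out_eq]
  t_eq := fun e => quotEdge_target T (T.s e) e rfl

lemma quotHom_e_eq (T : RGraph) {w : T.V} (e : T.E) (he : T.s e = w) :
    T.quotHom.e e = T.quotEdge w e he := by
  subst he
  rfl

end RGraph

namespace RGraph

lemma quotHom_outMap_bijective (T : RGraph) (q : T.V) :
    Function.Bijective (T.quotHom.outMap q) := by
  have hc := T.coneHom_isIso q
  constructor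
  · rintro ⟨a, ha⟩ ⟨a', ha'⟩ h
    have h0 : T.quotHom.e a = T.quotHom.e a' := Subtype.ext_iff.mp h
    rw [T.quotHom_e_eq a ha, T.quotHom_e_eq a' ha'] at h0
    have h1 := Subtype.ext_iff.mp h0
    have h2 := hc.2.injective (Subtype.ext h1)
    have h3 := Subtype.ext_iff.mp h2
    exact Subtype.ext h3
  · rintro ⟨f, hf⟩
    have hf' : Quotient.mk T.coneSetoid (T.s f.1) = Quotient.mk T.coneSetoid q := hf
    have hsf : T.s f.1 = (Quotient.mk T.coneSetoid q).out := by
      conv_lhs => rw [f.2]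
      exact congrArg Quotient.out hf'
    have hre : T.Reach (Quotient.mk T.coneSetoid q).out (T.s f.1) := by
      rw [hsf]
      exact T.reach_self _
    obtain ⟨x, hx⟩ := hc.2.surjective ⟨f.1, hre⟩
    have hxs : (T.subgraph q).s x = (T.subgraph q).root := by
      apply hc.1.injective
      rw [← (T.coneHom q).s_eq, hx, (T.coneHom q).root_eq]
      apply Subtype.ext
      exact hsf
    have hsx : T.s x.1 = q := congrArg Subtype.val hxs
    refine ⟨⟨x.1, hsx⟩, ?_⟩
    apply Subtype.ext
    show T.quotHom.e x.1 = f
    rw [T.quotHom_e_eq x.1 hsx]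
    apply Subtype.ext
    show ((T.coneHom q).e ⟨x.1, _⟩).1 = f.1
    have h5 := congrArg Subtype.val hx
    exact h5

lemma coneQuot_finV (T : RGraph) (h : FinManyCones T) : Finite T.coneQuot.V := by
  obtain ⟨S, hSfin, hScover⟩ := h
  haveI := hSfin.to_subtype
  apply Finite.of_surjective (f := fun w : S => Quotient.mk T.coneSetoid w.1)
  intro c
  obtain ⟨v, rfl⟩ := Quotient.exists_rep c
  obtain ⟨w, hwS, hiso⟩ := hScover v
  exact ⟨⟨w, hwS⟩, Quotient.sound (RGraph.Iso.symm hiso)⟩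

lemma coneQuot_finE (T : RGraph) (hlf : T.LocallyFinite) (hV : Finite T.coneQuot.V) :
    Finite T.coneQuot.E := by
  haveI : ∀ c : T.coneQuot.V, Finite {e : T.E // T.s e = c.out} := fun c => hlf c.out
  haveI : Finite (Σ c : T.coneQuot.V, {e : T.E // T.s e = c.out}) := inferInstance
  apply Finite.of_injective (f := fun e : T.coneQuot.E =>
    (⟨Quotient.mk T.coneSetoid (T.s e.1), ⟨e.1, e.2⟩⟩ :
      Σ c : T.coneQuot.V, {e : T.E // T.s e = c.out}))
  have hcomp : Function.Injective
      ((fun x : Σ c : T.coneQuot.V, {e : T.E // T.s e = c.out} => x.2.1) ∘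
        (fun e : T.coneQuot.E =>
          (⟨Quotient.mk T.coneSetoid (T.s e.1), ⟨e.1, e.2⟩⟩ :
            Σ c : T.coneQuot.V, {e : T.E // T.s e = c.out}))) :=
    fun a b hab => Subtype.ext hab
  exact hcomp.of_comp

end RGraph

end Aux

/-- Belk–Bleak–Matucci. A locally finite tree has finitely many cone
types if and only if it is isomorphic, as a rooted directed graph, to the universal
covering tree of a finite connected graph. -/
theorem stmt7 (T : RGraph) (hT : T.IsTree) (hlf : T.LocallyFinite) :
    FinManyCones T ↔
      ∃ A : RGraph, Finite A.V ∧ Finite A.E ∧ A.Connected ∧ RGraph.Iso T A.cover := by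
  constructor
  · intro hFMC
    refine ⟨T.coneQuot, RGraph.coneQuot_finV T hFMC,
      RGraph.coneQuot_finE T hlf (RGraph.coneQuot_finV T hFMC), ?_, ?_⟩
    · intro c
      obtain ⟨w, rfl⟩ := Quotient.exists_rep c
      obtain ⟨⟨l, hl⟩, hl2⟩ := hT.2 w
      exact T.quotHom.reach_map ⟨l, hl, hl2⟩
    · exact RGraph.iso_cover_of_outMap hT T.quotHom (RGraph.quotHom_outMap_bijective T)
  · rintro ⟨A, hV, hE, hconn, hiso⟩
    obtain ⟨p, hp⟩ := hiso
    haveI := hV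
    haveI : Nonempty T.V := ⟨T.root⟩
    classical
    set f : T.V → A.V := fun v => A.pathTarget A.root (p.v v).1 with hf
    set g : A.V → T.V := Function.invFun f with hg
    refine ⟨Set.range g, Set.finite_range g, ?_⟩
    intro v
    refine ⟨g (f v), ⟨f v, rfl⟩, ?_⟩
    have hgf : f (g (f v)) = f v := Function.invFun_eq ⟨v, rfl⟩
    have i1 := RGraph.iso_subgraph p hp v
    have i2 := RGraph.cover_subgraph_iso (p.v v) (p.v (g (f v))) hgf.symm
    have i3 := RGraph.iso_subgraph p hp (g (f v))
    exact (i1.trans i2).trans i3.symm
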